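/- Let R be a commutative Noetherian local ring, I an ideal, C and M finitely generated R-modules with M ∈ [C]_n (the ball of radius n centered at C) for some n ≥ 1. Then Ann_R Γ_I(M) ⊇ (Ann_R Γ_I(R) · Ann_R Γ_I(C))^n, where Γ_I denotes the I-torsion submodule functor. -/

import Mathlib

open CategoryTheory IsLocalRing

universe u

section Prelim

variable (R : Type u) [CommRing R]

/-- The depth of a module over a local ring: the supremum of the lengths of
(weakly) regular sequences on `M` consisting of elements of the maximal ideal. -/
noncomputable def mdepth [IsLocalRing R] (M : Type u) [AddCommGroup M] [Module R M] : ℕ∞ :=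
  sSup {n : ℕ∞ | ∃ rs : List R, (rs.length : ℕ∞) = n ∧ (∀ r ∈ rs, r ∈ maximalIdeal R) ∧
    RingTheory.Sequence.IsWeaklyRegular M rs}

/-- A short exact sequence `0 → L → M → N → 0` of `R`-modules. -/
def SES (L M N : ModuleCat.{u} R) : Prop :=
  ∃ (f : L →ₗ[R] M) (g : M →ₗ[R] N),
    Function.Injective f ∧ Function.Surjective g ∧ LinearMap.ker g = LinearMap.range f

/-- `N` is a direct summand of `M`. -/
def IsSummand (N M : ModuleCat.{u} R) : Prop :=
  ∃ (i : N →ₗ[R] M) (p : M →ₗ[R] N), p.comp i = LinearMap.id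

/-- `N` is a (minimal) first syzygy of `M`: the kernel of a minimal free cover of `M`. -/
def IsSyzygy (M N : ModuleCat.{u} R) : Prop :=
  ∃ (n : ℕ) (f : (Fin n → R) →ₗ[R] M), Function.Surjective f ∧
    LinearMap.ker f ≤ ((⊥ : Ideal R).jacobson) • (⊤ : Submodule R (Fin n → R)) ∧
    Nonempty (N ≃ₗ[R] LinearMap.ker f)

/-- `N` is an `n`-th (minimal) syzygy of `M`. -/
def IsNSyzygy : ℕ → ModuleCat.{u} R → ModuleCat.{u} R → Prop
  | 0, M, N => Nonempty (N ≃ₗ[R] M)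
  | n + 1, M, N => ∃ K : ModuleCat.{u} R, IsSyzygy R M K ∧ IsNSyzygy n K N

/-- The additive closure of a class of modules: closure under finite direct sums
and direct summands. -/
inductive AddClosure (T : Set (ModuleCat.{u} R)) : ModuleCat.{u} R → Prop
  | of {M : ModuleCat.{u} R} : M ∈ T → AddClosure T M
  | prod {M N : ModuleCat.{u} R} : AddClosure T M → AddClosure T N →
      AddClosure T (ModuleCat.of R (M × N))
  | summand {M N : ModuleCat.{u} R} : AddClosure T M → IsSummand R N M → AddClosure T N

/-- `[X]`: the additive closure of `{R} ∪ {Ω^i X : i ≥ 0, X ∈ X}`. -/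
def bracket (X : Set (ModuleCat.{u} R)) : Set (ModuleCat.{u} R) :=
  {M | AddClosure R (insert (ModuleCat.of R R)
    {N | ∃ M₀ ∈ X, ∃ i : ℕ, IsNSyzygy R i M₀ N}) M}

/-- `X ∘ Y`: modules `M` fitting in an exact sequence `0 → X → M → Y → 0`. -/
def circOp (X Y : Set (ModuleCat.{u} R)) : Set (ModuleCat.{u} R) :=
  {M | ∃ X₀ ∈ X, ∃ Y₀ ∈ Y, SES R X₀ M Y₀}

/-- `X • Y = [[X] ∘ [Y]]`. -/
def bull (X Y : Set (ModuleCat.{u} R)) : Set (ModuleCat.{u} R) :=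
  bracket R (circOp R (bracket R X) (bracket R Y))

/-- The ball `[C]_r` of radius `r` centered at `C`. -/
def ball (C : ModuleCat.{u} R) : ℕ → Set (ModuleCat.{u} R)
  | 0 => ∅
  | 1 => bracket R {C}
  | r + 2 => bracket R (circOp R (ball C (r + 1)) (bracket R {C}))

/-- A resolving subcategory of `mod R`. -/
def IsResolving (X : Set (ModuleCat.{u} R)) : Prop :=
  (∀ M ∈ X, Module.Finite R M) ∧
  (ModuleCat.of R R ∈ X) ∧
  (∀ M ∈ X, ∀ N : ModuleCat.{u} R, IsSummand R N M → N ∈ X) ∧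
  (∀ L M N : ModuleCat.{u} R, SES R L M N → L ∈ X → N ∈ X → M ∈ X) ∧
  (∀ L M N : ModuleCat.{u} R, SES R L M N → M ∈ X → N ∈ X → L ∈ X)

end Prelim

section Prelim2

variable (R : Type u) [CommRing R]

/-- The Ext module `Ext^n_R(M, N)`. -/
noncomputable def extM (M N : ModuleCat.{u} R) (n : ℕ) : ModuleCat.{u} R :=
  ((Ext R (ModuleCat.{u} R) n).obj (Opposite.op M)).obj N

/-- A finitely generated module `M` is totally reflexive if `M → M**` is bijective and
`Ext^i(M, R) = 0 = Ext^i(M*, R)` for all `i > 0`. -/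
def TotallyReflexive (M : Type u) [AddCommGroup M] [Module R M] : Prop :=
  Module.Finite R M ∧
  Function.Bijective (Module.Dual.eval R M) ∧
  (∀ i : ℕ, 0 < i →
    Subsingleton (extM R (ModuleCat.of R M) (ModuleCat.of R R) i)) ∧
  (∀ i : ℕ, 0 < i →
    Subsingleton (extM R (ModuleCat.of R (Module.Dual R M)) (ModuleCat.of R R) i))

/-- `C` is a first cosyzygy `Ω⁻¹M` of `M`: the `R`-dual of a minimal first syzygy of `M*`. -/
def IsCosyzygy (M : Type u) [AddCommGroup M] [Module R M] (C : ModuleCat.{u} R) : Prop :=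
  ∃ K : ModuleCat.{u} R, IsSyzygy R (ModuleCat.of R (Module.Dual R M)) K ∧
    Nonempty (C ≃ₗ[R] Module.Dual R K)

/-- `T` is the Auslander transpose of `M`: the cokernel of the dual of the first map
in a minimal free presentation of `M`. -/
def IsTranspose (M T : ModuleCat.{u} R) : Prop :=
  ∃ (n₀ n₁ : ℕ) (d : (Fin n₁ → R) →ₗ[R] (Fin n₀ → R)) (p : (Fin n₀ → R) →ₗ[R] M),
    Function.Surjective p ∧ LinearMap.ker p = LinearMap.range d ∧
    LinearMap.ker p ≤ ((⊥ : Ideal R).jacobson) • (⊤ : Submodule R (Fin n₀ → R)) ∧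
    LinearMap.ker d ≤ ((⊥ : Ideal R).jacobson) • (⊤ : Submodule R (Fin n₁ → R)) ∧
    Nonempty (T ≃ₗ[R] (Module.Dual R (Fin n₁ → R) ⧸ LinearMap.range d.dualMap))

/-- The `I`-torsion submodule `Γ_I(M)`. -/
def torsSub (I : Ideal R) (M : Type u) [AddCommGroup M] [Module R M] : Submodule R M :=
  ⨆ n : ℕ, Submodule.torsionBySet R M ((I ^ n : Ideal R) : Set R)

/-- A Noetherian local ring is Gorenstein iff it has finite self-injective dimension,
iff `Ext^i(k, R) = 0` for all sufficiently large `i`. -/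
def IsGorensteinLocal [IsLocalRing R] : Prop :=
  ∃ n : ℕ, ∀ i : ℕ, n < i →
    Subsingleton (extM R (ModuleCat.of R (ResidueField R)) (ModuleCat.of R R) i)

/-- A maximal Cohen-Macaulay module: finitely generated with depth equal to `dim R`. -/
def IsMCM [IsLocalRing R] (M : ModuleCat.{u} R) : Prop :=
  Module.Finite R M ∧ ((mdepth R M : ℕ∞) : WithBot ℕ∞) = ringKrullDim R

/-- `X` is a thick subcategory of `G`: closed under direct summands and two-out-of-three
for short exact sequences with all terms in `G`. -/
def IsThickIn (G X : Set (ModuleCat.{u} R)) : Prop :=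
  X ⊆ G ∧ (∀ M ∈ X, ∀ N : ModuleCat.{u} R, IsSummand R N M → N ∈ X) ∧
  (∀ L M N : ModuleCat.{u} R, L ∈ G → M ∈ G → N ∈ G → SES R L M N →
    ((L ∈ X ∧ M ∈ X) → N ∈ X) ∧ ((L ∈ X ∧ N ∈ X) → M ∈ X) ∧ ((M ∈ X ∧ N ∈ X) → L ∈ X))

/-- The resolving closure `res M`: the smallest resolving subcategory containing `M`. -/
def resClosure (M : ModuleCat.{u} R) : Set (ModuleCat.{u} R) :=
  ⋂₀ {X | IsResolving R X ∧ M ∈ X}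

/-- The ball `|G|_r` (no syzygies, no free modules added). -/
def pball (G : ModuleCat.{u} R) : ℕ → Set (ModuleCat.{u} R)
  | 0 => ∅
  | 1 => {M | AddClosure R {G} M}
  | r + 2 => {M | AddClosure R
      (circOp R (pball G (r + 1)) {N | AddClosure R {G} N}) M}

/-- An indecomposable module. -/
def Indecomp (M : ModuleCat.{u} R) : Prop :=
  ¬ Subsingleton M ∧ ∀ A B : Submodule R M, IsCompl A B → A = ⊥ ∨ B = ⊥

/-- `N` is the kernel of some surjection from a finite free module onto `M`
(a not-necessarily-minimal syzygy). -/
def IsGSyzygy (M N : ModuleCat.{u} R) : Prop :=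
  ∃ (n : ℕ) (f : (Fin n → R) →ₗ[R] M), Function.Surjective f ∧
    Nonempty (N ≃ₗ[R] LinearMap.ker f)

/-- `N` is an `n`-fold (not-necessarily-minimal) syzygy of `M`. -/
def IsGNSyzygy : ℕ → ModuleCat.{u} R → ModuleCat.{u} R → Prop
  | 0, M, N => Nonempty (N ≃ₗ[R] M)
  | n + 1, M, N => ∃ K : ModuleCat.{u} R, IsGSyzygy R M K ∧ IsGNSyzygy n K N

/-- Projective dimension at most `n`. -/
def PdLE (n : ℕ) (M : ModuleCat.{u} R) : Prop :=
  ∃ N : ModuleCat.{u} R, IsGNSyzygy R n M N ∧ Module.Projective R N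

/-- Projective dimension, as an element of `ℕ∞`. -/
noncomputable def pdim (M : ModuleCat.{u} R) : ℕ∞ :=
  sInf {n : ℕ∞ | ∃ m : ℕ, (m : ℕ∞) = n ∧ PdLE R m M}

end Prelim2

section AnnTors

variable {R : Type u} [CommRing R] (I : Ideal R)

lemma mem_torsSub_iff {M : Type u} [AddCommGroup M] [Module R M] (x : M) :
    x ∈ torsSub R I M ↔ ∃ n : ℕ, ∀ r ∈ I ^ n, r • x = 0 := by
  unfold torsSub
  rw [Submodule.mem_iSup_of_directed]
  · constructor
    · rintro ⟨n, hn⟩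
      rw [Submodule.mem_torsionBySet_iff] at hn
      exact ⟨n, fun r hr => hn ⟨r, hr⟩⟩
    · rintro ⟨n, hn⟩
      exact ⟨n, (Submodule.mem_torsionBySet_iff _ _).2 fun r => hn r r.2⟩
  · intro i j
    refine ⟨max i j, Submodule.torsionBySet_le_torsionBySet_of_subset ?_,
      Submodule.torsionBySet_le_torsionBySet_of_subset ?_⟩
    · exact fun x hx => Ideal.pow_le_pow_right (le_max_left i j) hx
    · exact fun x hx => Ideal.pow_le_pow_right (le_max_right i j) hx

lemma mem_ann_torsSub_iff {M : Type u} [AddCommGroup M] [Module R M] (a : R) :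
    a ∈ Module.annihilator R ↥(torsSub R I M) ↔ ∀ x ∈ torsSub R I M, a • x = 0 := by
  rw [Module.mem_annihilator]
  constructor
  · intro h x hx
    simpa using congrArg Subtype.val (h ⟨x, hx⟩)
  · intro h m
    exact Subtype.ext (by simpa using h m m.2)

lemma torsSub_map_mem {M N : Type u} [AddCommGroup M] [Module R M]
    [AddCommGroup N] [Module R N] (f : M →ₗ[R] N) {x : M}
    (hx : x ∈ torsSub R I M) : f x ∈ torsSub R I N := by
  rw [mem_torsSub_iff] at hx ⊢
  obtain ⟨n, hn⟩ := hx
  exact ⟨n, fun r hr => by rw [← map_smul, hn r hr, map_zero]⟩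

lemma ann_torsSub_le_of_inj {M N : Type u} [AddCommGroup M] [Module R M]
    [AddCommGroup N] [Module R N] (f : N →ₗ[R] M) (hf : Function.Injective f) :
    Module.annihilator R ↥(torsSub R I M) ≤ Module.annihilator R ↥(torsSub R I N) := by
  intro a ha
  rw [mem_ann_torsSub_iff] at ha ⊢
  intro x hx
  apply hf
  rw [map_smul, map_zero, ha _ (torsSub_map_mem I f hx)]

lemma ann_torsSub_le_of_equiv {M N : Type u} [AddCommGroup M] [Module R M]
    [AddCommGroup N] [Module R N] (e : N ≃ₗ[R] M) :
    Module.annihilator R ↥(torsSub R I M) ≤ Module.annihilator R ↥(torsSub R I N) :=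
  ann_torsSub_le_of_inj I e.toLinearMap e.injective

lemma ann_torsSub_mul_le_ses {X Y Z : Type u} [AddCommGroup X] [Module R X]
    [AddCommGroup Y] [Module R Y] [AddCommGroup Z] [Module R Z]
    (f : X →ₗ[R] Y) (g : Y →ₗ[R] Z) (hf : Function.Injective f)
    (hker : LinearMap.ker g = LinearMap.range f) :
    Module.annihilator R ↥(torsSub R I X) * Module.annihilator R ↥(torsSub R I Z) ≤
      Module.annihilator R ↥(torsSub R I Y) := by
  rw [Ideal.mul_le]
  intro a ha b hb
  rw [mem_ann_torsSub_iff] at ha hb ⊢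
  intro y hy
  have hgz : g (b • y) = 0 := by
    rw [map_smul, hb _ (torsSub_map_mem I g hy)]
  have hmem : b • y ∈ LinearMap.range f := by
    rw [← hker]; exact hgz
  obtain ⟨x, hx⟩ := hmem
  have hxt : x ∈ torsSub R I X := by
    rw [mem_torsSub_iff] at hy ⊢
    obtain ⟨n, hn⟩ := hy
    refine ⟨n, fun r hr => hf ?_⟩
    rw [map_smul, hx, map_zero, smul_comm, hn r hr, smul_zero]
  rw [mul_smul, ← hx, ← map_smul, ha x hxt, map_zero]

lemma ann_torsSub_inf_le_prod {M N : Type u} [AddCommGroup M] [Module R M]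
    [AddCommGroup N] [Module R N] :
    Module.annihilator R ↥(torsSub R I M) ⊓ Module.annihilator R ↥(torsSub R I N) ≤
      Module.annihilator R ↥(torsSub R I (M × N)) := by
  intro a ha
  rw [Submodule.mem_inf] at ha
  obtain ⟨ha, hb⟩ := ha
  rw [mem_ann_torsSub_iff] at ha hb ⊢
  intro x hx
  have h1 := torsSub_map_mem I (LinearMap.fst R M N) hx
  have h2 := torsSub_map_mem I (LinearMap.snd R M N) hx
  exact Prod.ext (ha _ h1) (hb _ h2)

lemma ann_torsSub_R_le_pi (m : ℕ) :
    Module.annihilator R ↥(torsSub R I R) ≤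
      Module.annihilator R ↥(torsSub R I (Fin m → R)) := by
  intro a ha
  rw [mem_ann_torsSub_iff] at ha ⊢
  intro x hx
  funext i
  have : x i ∈ torsSub R I R := torsSub_map_mem I (LinearMap.proj i) hx
  simpa using ha _ this

lemma ann_torsSub_R_le_syzygy {M K : ModuleCat.{u} R} (h : IsSyzygy R M K) :
    Module.annihilator R ↥(torsSub R I R) ≤ Module.annihilator R ↥(torsSub R I ↥K) := by
  obtain ⟨m, f, -, -, ⟨e⟩⟩ := h
  refine le_trans (ann_torsSub_R_le_pi I m) (le_trans ?_ (ann_torsSub_le_of_equiv I e))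
  exact ann_torsSub_le_of_inj I (LinearMap.ker f).subtype Subtype.val_injective

lemma ann_torsSub_R_le_nsyzygy {M N : ModuleCat.{u} R} (i : ℕ)
    (h : IsNSyzygy R (i + 1) M N) :
    Module.annihilator R ↥(torsSub R I R) ≤ Module.annihilator R ↥(torsSub R I ↥N) := by
  induction i generalizing M N with
  | zero =>
    obtain ⟨K, hK, ⟨e⟩⟩ := h
    exact le_trans (ann_torsSub_R_le_syzygy I hK) (ann_torsSub_le_of_equiv I e)
  | succ i ih =>
    obtain ⟨K, -, hK⟩ := h
    exact ih hK

lemma ann_torsSub_of_addClosure (J : Ideal R) (T : Set (ModuleCat.{u} R))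
    (hT : ∀ M₀ ∈ T, J ≤ Module.annihilator R ↥(torsSub R I ↥M₀))
    {M : ModuleCat.{u} R} (h : AddClosure R T M) :
    J ≤ Module.annihilator R ↥(torsSub R I ↥M) := by
  induction h with
  | of h => exact hT _ h
  | @prod M N h1 h2 ih1 ih2 =>
    exact le_trans (le_inf ih1 ih2) (ann_torsSub_inf_le_prod I)
  | summand h hs ih =>
    obtain ⟨i, p, hpi⟩ := hs
    have hinj : Function.Injective i :=
      Function.LeftInverse.injective (g := p) fun x => DFunLike.congr_fun hpi x
    exact le_trans ih (ann_torsSub_le_of_inj I i hinj)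

lemma ann_torsSub_of_bracket (J : Ideal R) (X : Set (ModuleCat.{u} R))
    (hR : J ≤ Module.annihilator R ↥(torsSub R I R))
    (hX : ∀ M₀ ∈ X, J ≤ Module.annihilator R ↥(torsSub R I ↥M₀))
    {M : ModuleCat.{u} R} (h : M ∈ bracket R X) :
    J ≤ Module.annihilator R ↥(torsSub R I ↥M) := by
  refine ann_torsSub_of_addClosure I J _ ?_ h
  rintro M₀ (rfl | ⟨M₁, hM₁, i, hi⟩)
  · exact hR
  · match i, hi with
    | 0, ⟨e⟩ => exact le_trans (hX _ hM₁) (ann_torsSub_le_of_equiv I e)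
    | i + 1, hi => exact le_trans hR (ann_torsSub_R_le_nsyzygy I i hi)

end AnnTors

section MainAux

variable {R : Type u} [CommRing R] (I : Ideal R) (C : ModuleCat.{u} R)

lemma ann_torsSub_of_ball : ∀ (n : ℕ) (M : ModuleCat.{u} R), M ∈ ball R C (n + 1) →
    (Module.annihilator R ↥(torsSub R I R) * Module.annihilator R ↥(torsSub R I ↥C)) ^ (n + 1)
      ≤ Module.annihilator R ↥(torsSub R I ↥M) := by
  intro n
  induction n with
  | zero =>
    intro M hM
    rw [pow_one]
    refine ann_torsSub_of_bracket I _ _ Ideal.mul_le_left ?_ hM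
    rintro M₀ rfl
    exact Ideal.mul_le_right
  | succ n ih =>
    intro M hM
    have hJ : (Module.annihilator R ↥(torsSub R I R) *
        Module.annihilator R ↥(torsSub R I ↥C)) ^ (n + 1 + 1) ≤
        Module.annihilator R ↥(torsSub R I R) := by
      calc (Module.annihilator R ↥(torsSub R I R) *
              Module.annihilator R ↥(torsSub R I ↥C)) ^ (n + 1 + 1)
          ≤ (Module.annihilator R ↥(torsSub R I R) *
              Module.annihilator R ↥(torsSub R I ↥C)) ^ 1 :=
            Ideal.pow_le_pow_right (by omega)
        _ = _ := pow_one _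
        _ ≤ _ := Ideal.mul_le_left
    refine ann_torsSub_of_bracket I _ _ hJ ?_ hM
    rintro M₀ ⟨X₀, hX₀, Y₀, hY₀, f, g, hf, hg, hker⟩
    have h1 := ih X₀ hX₀
    have h2 : Module.annihilator R ↥(torsSub R I R) * Module.annihilator R ↥(torsSub R I ↥C)
        ≤ Module.annihilator R ↥(torsSub R I ↥Y₀) := by
      refine ann_torsSub_of_bracket I _ _ Ideal.mul_le_left ?_ hY₀
      rintro M₁ rfl
      exact Ideal.mul_le_right
    calc (Module.annihilator R ↥(torsSub R I R) *
            Module.annihilator R ↥(torsSub R I ↥C)) ^ (n + 2)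
        = (Module.annihilator R ↥(torsSub R I R) *
            Module.annihilator R ↥(torsSub R I ↥C)) ^ (n + 1) *
          (Module.annihilator R ↥(torsSub R I R) *
            Module.annihilator R ↥(torsSub R I ↥C)) := by rw [← pow_succ]
      _ ≤ Module.annihilator R ↥(torsSub R I ↥X₀) *
            Module.annihilator R ↥(torsSub R I ↥Y₀) := Ideal.mul_mono h1 h2
      _ ≤ Module.annihilator R ↥(torsSub R I ↥M₀) :=
        ann_torsSub_mul_le_ses I f g hf hker

end MainAux

/-- If `M ∈ [C]_n` (`n ≥ 1`), then
`Ann_R Γ_I(M) ⊇ (Ann_R Γ_I(R) · Ann_R Γ_I(C))^n`. -/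
theorem annihilator_torsion_of_mem_ball
    (R : Type u) [CommRing R] [IsNoetherianRing R] [IsLocalRing R]
    (I : Ideal R) (C M : ModuleCat.{u} R) (n : ℕ) (hn : 1 ≤ n)
    (h : M ∈ ball R C n) :
    (Module.annihilator R ↥(torsSub R I R) * Module.annihilator R ↥(torsSub R I ↥C)) ^ n ≤
      Module.annihilator R ↥(torsSub R I ↥M) := by
  obtain ⟨m, rfl⟩ : ∃ m, n = m + 1 := ⟨n - 1, by omega⟩
  exact ann_torsSub_of_ball I C m M h
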